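/- Let r ∈ [0,1] and let f be a holomorphic function on 𝔻 with ‖f‖_log < ∞. Let f_r denote the dilate f_r(z) = f(rz). Then |f_r(0)| + ‖f_r‖_log ≤ |f(0)| + ‖f‖_log; that is, |f(0)| + sup_{z∈𝔻} v_log(z)·r·|f′(rz)| ≤ |f(0)| + sup_{z∈𝔻} v_log(z)·|f′(z)|. In particular, the dilation operator K_r f = f_r maps the log-Bloch space into itself with norm at most 1. -/

import Mathlib

/-- The weight `t ↦ t * log (3/t)` is monotone on `(0, 1]`. -/
lemma aux_weight_mono (a b : ℝ) (ha : 0 < a) (hab : a ≤ b) (hb1 : b ≤ 1) :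
    a * Real.log (3 / a) ≤ b * Real.log (3 / b) := by
  have hb : 0 < b := ha.trans_le hab
  have h1 : (1:ℝ) ≤ Real.log (3 / b) := by
    rw [Real.le_log_iff_exp_le (by positivity)]
    calc Real.exp 1 ≤ 2.7182818286 := (Real.exp_one_lt_d9).le
      _ ≤ 3 / 1 := by norm_num
      _ ≤ 3 / b := by gcongr <;> norm_num
  have h2 : Real.log (b / a) ≤ b / a - 1 := Real.log_le_sub_one_of_pos (by positivity)
  have h3 : Real.log (3 / a) = Real.log (3 / b) + Real.log (b / a) := by
    rw [← Real.log_mul (by positivity) (by positivity)]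
    congr 1; field_simp
  rw [h3]
  have h4 : a * Real.log (b/a) ≤ b - a := by
    calc a * Real.log (b/a) ≤ a * (b/a - 1) := mul_le_mul_of_nonneg_left h2 ha.le
      _ = b - a := by field_simp
  nlinarith [mul_nonneg (sub_nonneg.mpr hab) (sub_nonneg.mpr h1)]

/-- Let `r ∈ [0,1]` and let `f` be holomorphic on `𝔻` with finite log-Bloch seminorm.
Then the dilate `f_r z = f (r * z)` satisfies
`|f_r 0| + ‖f_r‖_log ≤ |f 0| + ‖f‖_log` (stated pointwise in `z`, which is
equivalent, using that `f_r' z = r * f' (r*z)` and `f_r 0 = f 0`); in particular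
the dilation operator `K_r` has norm at most `1` on the log-Bloch space. -/
theorem stmt_15 (r : ℝ) (hr : r ∈ Set.Icc (0 : ℝ) 1)
    (f : ℂ → ℂ) (hf : DifferentiableOn ℂ f (Metric.ball (0 : ℂ) 1))
    (hbdd : BddAbove ((fun z : ℂ => (1 - ‖z‖) * Real.log (3 / (1 - ‖z‖)) *
      ‖deriv f z‖) '' Metric.ball (0 : ℂ) 1)) :
    ∀ z ∈ Metric.ball (0 : ℂ) 1,
      ‖f 0‖ + (1 - ‖z‖) * Real.log (3 / (1 - ‖z‖)) *
        (r * ‖deriv f ((r : ℂ) * z)‖) ≤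
      ‖f 0‖ +
        sSup ((fun z : ℂ => (1 - ‖z‖) * Real.log (3 / (1 - ‖z‖)) *
          ‖deriv f z‖) '' Metric.ball (0 : ℂ) 1) := by
  obtain ⟨hr0, hr1⟩ := hr
  intro z hz
  simp only [Metric.mem_ball, dist_zero_right] at hz
  have haz0 : 0 ≤ ‖z‖ := norm_nonneg z
  have hrz : ‖(r:ℂ) * z‖ = r * ‖z‖ := by
    rw [norm_mul, Complex.norm_of_nonneg hr0]
  have hmem : (r:ℂ) * z ∈ Metric.ball (0 : ℂ) 1 := by
    simp only [Metric.mem_ball, dist_zero_right, hrz]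
    calc r * ‖z‖ ≤ 1 * ‖z‖ := by gcongr
      _ < 1 := by simpa using hz
  apply add_le_add_right
  have hsup : (1 - ‖(r:ℂ)*z‖) * Real.log (3 / (1 - ‖(r:ℂ)*z‖)) *
      ‖deriv f ((r:ℂ)*z)‖ ≤
      sSup ((fun z : ℂ => (1 - ‖z‖) * Real.log (3 / (1 - ‖z‖)) *
        ‖deriv f z‖) '' Metric.ball (0 : ℂ) 1) :=
    le_csSup hbdd ⟨(r:ℂ)*z, hmem, rfl⟩
  refine le_trans ?_ hsup
  rw [hrz]
  have key : r * ((1 - ‖z‖) * Real.log (3 / (1 - ‖z‖))) ≤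
      (1 - r * ‖z‖) * Real.log (3 / (1 - r * ‖z‖)) := by
    have ha : 0 < 1 - ‖z‖ := by linarith
    have hlogpos : 0 ≤ Real.log (3 / (1 - ‖z‖)) := by
      apply Real.log_nonneg
      rw [le_div_iff₀ ha]; linarith
    calc r * ((1 - ‖z‖) * Real.log (3 / (1 - ‖z‖)))
        ≤ 1 * ((1 - ‖z‖) * Real.log (3 / (1 - ‖z‖))) := by
          apply mul_le_mul_of_nonneg_right hr1 (by positivity)
      _ = (1 - ‖z‖) * Real.log (3 / (1 - ‖z‖)) := one_mul _
      _ ≤ (1 - r * ‖z‖) * Real.log (3 / (1 - r * ‖z‖)) := by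
          apply aux_weight_mono _ _ ha
          · nlinarith
          · nlinarith
  calc (1 - ‖z‖) * Real.log (3 / (1 - ‖z‖)) *
        (r * ‖deriv f ((r:ℂ) * z)‖)
      = (r * ((1 - ‖z‖) * Real.log (3 / (1 - ‖z‖)))) *
        ‖deriv f ((r:ℂ) * z)‖ := by ring
    _ ≤ (1 - r * ‖z‖) * Real.log (3 / (1 - r * ‖z‖)) *
        ‖deriv f ((r:ℂ) * z)‖ :=
        mul_le_mul_of_nonneg_right key (norm_nonneg _)
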